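/- (Cross-term bound.) There is an absolute constant K_C such that the following holds. Fix any hash function h : [n] → [t] for which the events E_h and E_B both hold. Then for any unit vector y ∈ C(A) and any δ_C ∈ (0, 1/e], with probability at least 1 − δ_C over the random signs D, |y_{1:(s−1)}ᵀ D Φᵀ Φ D y_{s:n}| ≤ K_C·√(W·log(1/δ_C)), where W = T·log(t/δ_h) + r/t. -/

import Mathlib

open Matrix Finset Real

noncomputable section

/-- `±1` sign value of a Boolean. -/
def sgn (b : Bool) : ℝ := if b then 1 else -1

/-- The sparse embedding matrix `ΦD` determined by a hash function `h : [n] → [t]`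
and random signs `σ`. -/
def SE {n t : ℕ} (h : Fin n → Fin t) (σ : Fin n → Bool) :
    Matrix (Fin t) (Fin n) ℝ :=
  fun a j => (if h j = a then (1 : ℝ) else 0) * sgn (σ j)

/-- Squared Euclidean norm. -/
def sqnorm {ι : Type*} [Fintype ι] (y : ι → ℝ) : ℝ := ∑ i, y i ^ 2

/-- Leverage scores: squared Euclidean norms of the rows of `U`. -/
def lev {n r : ℕ} (U : Matrix (Fin n) (Fin r) ℝ) (i : Fin n) : ℝ := ∑ k, U i k ^ 2

lemma sgn_mul_sgn (a b : Bool) : sgn a * sgn b = sgn (a == b) := by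
  cases a <;> cases b <;> norm_num [sgn]

lemma beq_beq_right (a b : Bool) : ((a == b) == b) = a := by
  cases a <;> cases b <;> rfl

lemma sum_exp_lin (n : ℕ) (c : Fin n → ℝ) :
    ∑ σ : Fin n → Bool, Real.exp (∑ j, c j * sgn (σ j))
      = ∏ j, (Real.exp (c j) + Real.exp (-c j)) := by
  have h1 : ∀ j : Fin n, Real.exp (c j) + Real.exp (-c j)
      = ∑ b : Bool, Real.exp (c j * sgn b) := by
    intro j; rw [Fintype.sum_bool]; norm_num [sgn]
  simp_rw [h1, Real.exp_sum]
  rw [Finset.prod_univ_sum, Fintype.piFinset_univ]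

lemma mgf_bound (n : ℕ) (c : Fin n → ℝ) :
    ∑ σ : Fin n → Bool, Real.exp (∑ j, c j * sgn (σ j))
      ≤ 2 ^ n * Real.exp ((∑ j, c j ^ 2) / 2) := by
  rw [sum_exp_lin]
  calc ∏ j, (Real.exp (c j) + Real.exp (-c j))
      ≤ ∏ j : Fin n, 2 * Real.exp (c j ^ 2 / 2) := by
        apply Finset.prod_le_prod
        · intro j _; positivity
        · intro j _
          have := Real.cosh_le_exp_half_sq (c j)
          rw [Real.cosh_eq] at this; linarith
    _ = 2 ^ n * Real.exp ((∑ j, c j ^ 2) / 2) := by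
        rw [Finset.prod_mul_distrib, Finset.prod_const, ← Real.exp_sum,
          Finset.card_univ, Fintype.card_fin, ← Finset.sum_div]

lemma tail_one_sided (n : ℕ) (c : Fin n → ℝ) (u lam : ℝ) (hlam : 0 ≤ lam) :
    ((Finset.univ.filter (fun σ : Fin n → Bool => u < ∑ j, c j * sgn (σ j))).card : ℝ)
      ≤ Real.exp (-(lam * u)) * (2 ^ n * Real.exp (lam ^ 2 * (∑ j, c j ^ 2) / 2)) := by
  classical
  set F := Finset.univ.filter (fun σ : Fin n → Bool => u < ∑ j, c j * sgn (σ j)) with hF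
  have key : (F.card : ℝ) * Real.exp (lam * u)
      ≤ ∑ σ : Fin n → Bool, Real.exp (∑ j, (lam * c j) * sgn (σ j)) := by
    have h1 : ∀ σ ∈ F, Real.exp (lam * u) ≤ Real.exp (∑ j, (lam * c j) * sgn (σ j)) := by
      intro σ hσ
      rw [hF, Finset.mem_filter] at hσ
      apply Real.exp_le_exp.mpr
      have h2 : ∑ j, (lam * c j) * sgn (σ j) = lam * ∑ j, c j * sgn (σ j) := by
        rw [Finset.mul_sum]; apply Finset.sum_congr rfl; intro j _; ring
      rw [h2]
      exact mul_le_mul_of_nonneg_left (le_of_lt hσ.2) hlam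
    calc (F.card : ℝ) * Real.exp (lam * u) = ∑ _σ ∈ F, Real.exp (lam * u) := by
          rw [Finset.sum_const, nsmul_eq_mul]
      _ ≤ ∑ σ ∈ F, Real.exp (∑ j, (lam * c j) * sgn (σ j)) := Finset.sum_le_sum h1
      _ ≤ ∑ σ : Fin n → Bool, Real.exp (∑ j, (lam * c j) * sgn (σ j)) :=
          Finset.sum_le_sum_of_subset_of_nonneg (Finset.filter_subset _ _)
            (fun _ _ _ => (Real.exp_pos _).le)
  have h3 := mgf_bound n (fun j => lam * c j)
  have h4 : ∑ j, (lam * c j) ^ 2 = lam ^ 2 * (∑ j, c j ^ 2) := by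
    rw [Finset.mul_sum]; apply Finset.sum_congr rfl; intro j _; ring
  rw [h4] at h3
  have h5 : (F.card : ℝ) * Real.exp (lam * u) ≤ 2 ^ n * Real.exp (lam ^ 2 * (∑ j, c j ^ 2) / 2) :=
    key.trans h3
  have hpos : (0:ℝ) < Real.exp (lam * u) := Real.exp_pos _
  have hinv : Real.exp (-(lam * u)) = (Real.exp (lam * u))⁻¹ := by
    rw [Real.exp_neg]
  rw [hinv, mul_comm ((Real.exp (lam * u))⁻¹) _, ← div_eq_mul_inv, le_div_iff₀ hpos]
  exact h5

lemma rademacher_tail (n : ℕ) (c : Fin n → ℝ) (u V : ℝ) (hu : 0 < u)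
    (hV : V = ∑ j, c j ^ 2) (hVpos : 0 < V) :
    ((Finset.univ.filter (fun σ : Fin n → Bool => u < |∑ j, c j * sgn (σ j)|)).card : ℝ)
      ≤ 2 ^ n * (2 * Real.exp (-(u ^ 2) / (2 * V))) := by
  classical
  set lam := u / V with hlam
  have hlam0 : 0 ≤ lam := le_of_lt (div_pos hu hVpos)
  have hexp : Real.exp (-(lam * u)) * (2 ^ n * Real.exp (lam ^ 2 * (∑ j, c j ^ 2) / 2))
      = (2:ℝ) ^ n * Real.exp (-(u ^ 2) / (2 * V)) := by
    rw [← hV]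
    have h6 : -(lam * u) + lam ^ 2 * V / 2 = -(u ^ 2) / (2 * V) := by
      have hV0 : V ≠ 0 := ne_of_gt hVpos
      field_simp [hlam]
      rw [hlam]; field_simp; ring
    calc Real.exp (-(lam * u)) * (2 ^ n * Real.exp (lam ^ 2 * V / 2))
        = (2:ℝ) ^ n * (Real.exp (-(lam * u)) * Real.exp (lam ^ 2 * V / 2)) := by ring
      _ = (2:ℝ) ^ n * Real.exp (-(u ^ 2) / (2 * V)) := by rw [← Real.exp_add, h6]
  have hsub : Finset.univ.filter (fun σ : Fin n → Bool => u < |∑ j, c j * sgn (σ j)|)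
      ⊆ (Finset.univ.filter (fun σ : Fin n → Bool => u < ∑ j, c j * sgn (σ j)))
        ∪ (Finset.univ.filter (fun σ : Fin n → Bool => u < ∑ j, (-c j) * sgn (σ j))) := by
    intro σ hσ
    rw [Finset.mem_filter] at hσ
    rcases lt_abs.mp hσ.2 with h | h
    · exact Finset.mem_union_left _ (Finset.mem_filter.mpr ⟨Finset.mem_univ _, h⟩)
    · refine Finset.mem_union_right _ (Finset.mem_filter.mpr ⟨Finset.mem_univ _, ?_⟩)
      have : ∑ j, (-c j) * sgn (σ j) = -∑ j, c j * sgn (σ j) := by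
        rw [← Finset.sum_neg_distrib]
        apply Finset.sum_congr rfl; intro j _; ring
      rw [this]; exact h
  have hcards := Finset.card_le_card hsub
  have hone := tail_one_sided n c u lam hlam0
  have htwo := tail_one_sided n (fun j => -c j) u lam hlam0
  have hsq : ∑ j, (-c j) ^ 2 = ∑ j, c j ^ 2 := by
    apply Finset.sum_congr rfl; intro j _; ring
  rw [hsq] at htwo
  have hcup := Finset.card_union_le
    (Finset.univ.filter (fun σ : Fin n → Bool => u < ∑ j, c j * sgn (σ j)))
    (Finset.univ.filter (fun σ : Fin n → Bool => u < ∑ j, (-c j) * sgn (σ j)))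
  have hstep : ((Finset.univ.filter (fun σ : Fin n → Bool => u < |∑ j, c j * sgn (σ j)|)).card : ℝ)
      ≤ ((Finset.univ.filter (fun σ : Fin n → Bool => u < ∑ j, c j * sgn (σ j))).card : ℝ)
        + ((Finset.univ.filter (fun σ : Fin n → Bool => u < ∑ j, (-c j) * sgn (σ j))).card : ℝ) := by
    exact_mod_cast le_trans (Nat.cast_le.mpr hcards) (Nat.cast_le.mpr hcup)
  calc ((Finset.univ.filter (fun σ : Fin n → Bool => u < |∑ j, c j * sgn (σ j)|)).card : ℝ)
      ≤ _ + _ := hstep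
    _ ≤ Real.exp (-(lam * u)) * (2 ^ n * Real.exp (lam ^ 2 * (∑ j, c j ^ 2) / 2))
        + Real.exp (-(lam * u)) * (2 ^ n * Real.exp (lam ^ 2 * (∑ j, c j ^ 2) / 2)) :=
        add_le_add hone htwo
    _ = 2 ^ n * (2 * Real.exp (-(u ^ 2) / (2 * V))) := by rw [hexp]; ring

set_option maxHeartbeats 2000000 in
theorem cross_term_bound :
    ∃ KC : ℝ, 0 < KC ∧
    ∀ (n d r t : ℕ) (A : Matrix (Fin n) (Fin d) ℝ) (U : Matrix (Fin n) (Fin r) ℝ),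
      A.rank = r → Uᵀ * U = 1 →
      (∀ y : Fin n → ℝ, y ∈ Set.range A.mulVec ↔ y ∈ Set.range U.mulVec) →
      (∀ i j : Fin n, i ≤ j → lev U j ≤ lev U i) →
    ∀ (δh T : ℝ), 0 < δh → 0 < T →
    ∀ s : ℕ,
      (∀ i : Fin n, (i : ℕ) < s → T < lev U i) →
      (∀ i : Fin n, s ≤ (i : ℕ) → lev U i ≤ T) →
    ∀ W : ℝ, W = T * Real.log (t / δh) + r / t →
    ∀ h : Fin n → Fin t,
      (∀ j : Fin t,
        (∑ i : Fin n,
          Set.indicator {i : Fin n | s ≤ (i : ℕ) ∧ h i = j} (lev U) i) ≤ W) →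
      Set.InjOn h {i : Fin n | (i : ℕ) < s} →
    ∀ y : Fin n → ℝ, y ∈ Set.range A.mulVec → sqnorm y = 1 →
    ∀ δC : ℝ, 0 < δC → δC ≤ 1 / Real.exp 1 →
    (1 - δC) * (Fintype.card (Fin n → Bool)) ≤
      Nat.card {σ : Fin n → Bool //
        |∑ a : Fin t,
            (SE h σ).mulVec (Set.indicator {i : Fin n | (i : ℕ) < s} y) a *
              (SE h σ).mulVec (Set.indicator {i : Fin n | s ≤ (i : ℕ)} y) a| ≤
          KC * Real.sqrt (W * Real.log (1 / δC))} := by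
  classical
  refine ⟨2, by norm_num, ?_⟩
  intro n d r t A U hrank hUtU hrange hmono δh T hδh hT s hheavy hlight W hW h hbucket hinj
    y hyA hysq δC hδC hδCe
  obtain ⟨x, hx⟩ := (hrange y).mp hyA
  have hysum : ∑ i, y i ^ 2 = 1 := hysq
  -- ‖x‖² = 1
  have hxnorm : ∑ k, x k ^ 2 = 1 := by
    have h3 : Uᵀ *ᵥ y = x := by
      rw [← hx, Matrix.mulVec_mulVec, hUtU, Matrix.one_mulVec]
    calc ∑ k, x k ^ 2 = x ⬝ᵥ x := by simp [dotProduct, sq]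
      _ = (Uᵀ *ᵥ y) ⬝ᵥ x := by rw [h3]
      _ = y ⬝ᵥ (U *ᵥ x) := by rw [Matrix.dotProduct_mulVec, Matrix.mulVec_transpose]
      _ = y ⬝ᵥ y := by rw [hx]
      _ = ∑ i, y i ^ 2 := by simp [dotProduct, sq]
      _ = 1 := hysum
  -- pointwise leverage bound
  have hylev : ∀ j : Fin n, y j ^ 2 ≤ lev U j := by
    intro j
    have h1 : y j = ∑ k, U j k * x k := by rw [← hx]; rfl
    rw [h1]
    calc (∑ k, U j k * x k) ^ 2 ≤ (∑ k, U j k ^ 2) * ∑ k, x k ^ 2 :=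
        Finset.sum_mul_sq_le_sq_mul_sq _ _ _
      _ = lev U j := by rw [hxnorm, mul_one]; rfl
  have hL1 : (1:ℝ) ≤ Real.log (1 / δC) := by
    rw [Real.le_log_iff_exp_le (by positivity)]
    rw [le_div_iff₀ hδC]
    have h1 : Real.exp 1 * δC ≤ Real.exp 1 * (1 / Real.exp 1) :=
      mul_le_mul_of_nonneg_left hδCe (Real.exp_pos 1).le
    have h2 : Real.exp 1 * (1 / Real.exp 1) = 1 := by
      field_simp
    linarith
  set y1 := Set.indicator {i : Fin n | (i : ℕ) < s} y with hy1def
  set y2 := Set.indicator {i : Fin n | s ≤ (i : ℕ)} y with hy2def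
  set L := Real.log (1 / δC) with hLdef
  set B := 2 * Real.sqrt (W * L) with hBdef
  have hB0 : 0 ≤ B := by rw [hBdef]; positivity
  -- per-bucket light mass bound
  have hWbound : ∀ i0 : Fin n,
      ∑ j ∈ Finset.univ.filter (fun j : Fin n => s ≤ (j:ℕ) ∧ h j = h i0), y j ^ 2 ≤ W := by
    intro i0
    have h1 := hbucket (h i0)
    have h2 : ∑ i' : Fin n, Set.indicator {i' : Fin n | s ≤ (i':ℕ) ∧ h i' = h i0} (lev U) i'
        = ∑ j ∈ Finset.univ.filter (fun j : Fin n => s ≤ (j:ℕ) ∧ h j = h i0), lev U j := by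
      rw [Finset.sum_filter]
      apply Finset.sum_congr rfl
      intro j _
      by_cases hj : s ≤ (j:ℕ) ∧ h j = h i0
      · rw [if_pos hj]
        exact Set.indicator_of_mem
          (show j ∈ {i' : Fin n | s ≤ (i':ℕ) ∧ h i' = h i0} from hj) (lev U)
      · rw [if_neg hj]
        exact Set.indicator_of_notMem
          (show j ∉ {i' : Fin n | s ≤ (i':ℕ) ∧ h i' = h i0} from hj) (lev U)
    calc ∑ j ∈ Finset.univ.filter (fun j : Fin n => s ≤ (j:ℕ) ∧ h j = h i0), y j ^ 2
        ≤ ∑ j ∈ Finset.univ.filter (fun j : Fin n => s ≤ (j:ℕ) ∧ h j = h i0), lev U j :=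
          Finset.sum_le_sum (fun j _ => hylev j)
      _ ≤ W := by rw [← h2]; exact h1
  -- partner function p
  obtain ⟨p, hp⟩ : ∃ p : Fin n → Fin n, ∀ j : Fin n,
      (∃ i : Fin n, (i : ℕ) < s ∧ h i = h j) → ((p j : ℕ) < s ∧ h (p j) = h j) := by
    choose! p hp1 hp2 using fun (j : Fin n) (hj : ∃ i : Fin n, (i:ℕ) < s ∧ h i = h j) => hj
    exact ⟨p, fun j hj => ⟨hp1 j hj, hp2 j hj⟩⟩
  have huniq : ∀ j i : Fin n, (∃ i' : Fin n, (i' : ℕ) < s ∧ h i' = h j) →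
      (i : ℕ) < s → h i = h j → i = p j := by
    intro j i hex his hij
    have h1 := hp j hex
    exact hinj his h1.1 (hij.trans h1.2.symm)
  set e : Fin n → ℝ := fun j =>
    if s ≤ (j : ℕ) ∧ ∃ i : Fin n, (i : ℕ) < s ∧ h i = h j then y j * y (p j) else 0 with hedef
  have he_pos : ∀ j : Fin n, (s ≤ (j : ℕ) ∧ ∃ i : Fin n, (i : ℕ) < s ∧ h i = h j) →
      e j = y j * y (p j) := by
    intro j hj; simp only [hedef]; rw [if_pos hj]
  have he_neg : ∀ j : Fin n, ¬ (s ≤ (j : ℕ) ∧ ∃ i : Fin n, (i : ℕ) < s ∧ h i = h j) →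
      e j = 0 := by
    intro j hj; simp only [hedef]; rw [if_neg hj]
  -- main identity
  have hXeq : ∀ σ : Fin n → Bool,
      (∑ a : Fin t, (SE h σ).mulVec y1 a * (SE h σ).mulVec y2 a)
        = ∑ j : Fin n, e j * sgn (σ j == σ (p j)) := by
    intro σ
    have expand : ∀ a : Fin t, (SE h σ).mulVec y1 a * (SE h σ).mulVec y2 a
        = ∑ i : Fin n, ∑ j : Fin n,
            ((if h i = a then (1:ℝ) else 0) * (if h j = a then (1:ℝ) else 0))
              * (sgn (σ i) * y1 i * (sgn (σ j) * y2 j)) := by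
      intro a
      show (∑ i, SE h σ a i * y1 i) * (∑ j, SE h σ a j * y2 j) = _
      rw [Finset.sum_mul_sum]
      apply Finset.sum_congr rfl; intro i _
      apply Finset.sum_congr rfl; intro j _
      show (if h i = a then (1:ℝ) else 0) * sgn (σ i) * y1 i
          * ((if h j = a then (1:ℝ) else 0) * sgn (σ j) * y2 j) = _
      ring
    calc ∑ a : Fin t, (SE h σ).mulVec y1 a * (SE h σ).mulVec y2 a
        = ∑ a : Fin t, ∑ i : Fin n, ∑ j : Fin n,
            ((if h i = a then (1:ℝ) else 0) * (if h j = a then (1:ℝ) else 0))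
              * (sgn (σ i) * y1 i * (sgn (σ j) * y2 j)) :=
          Finset.sum_congr rfl (fun a _ => expand a)
      _ = ∑ i : Fin n, ∑ j : Fin n, (if h i = h j then (1:ℝ) else 0)
              * (sgn (σ i) * y1 i * (sgn (σ j) * y2 j)) := by
          rw [Finset.sum_comm]
          apply Finset.sum_congr rfl; intro i _
          rw [Finset.sum_comm]
          apply Finset.sum_congr rfl; intro j _
          rw [← Finset.sum_mul]
          congr 1
          by_cases hij : h i = h j
          · rw [if_pos hij, hij]
            simp
          · rw [if_neg hij]
            apply Finset.sum_eq_zero; intro a _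
            by_cases hia : h i = a
            · have : h j ≠ a := fun hja => hij (hia.trans hja.symm)
              rw [if_neg this, mul_zero]
            · rw [if_neg hia, zero_mul]
      _ = ∑ j : Fin n, e j * sgn (σ j == σ (p j)) := by
          rw [Finset.sum_comm]
          apply Finset.sum_congr rfl
          intro j _
          by_cases hjs : s ≤ (j : ℕ)
          · by_cases hje : ∃ i : Fin n, (i : ℕ) < s ∧ h i = h j
            · have hpj := hp j hje
              have hy2j : y2 j = y j := Set.indicator_of_mem (show j ∈ {i : Fin n | s ≤ (i:ℕ)} from hjs) y
              have hej : e j = y j * y (p j) := he_pos j ⟨hjs, hje⟩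
              have inner : ∑ i : Fin n, (if h i = h j then (1:ℝ) else 0)
                    * (sgn (σ i) * y1 i * (sgn (σ j) * y2 j))
                  = (sgn (σ (p j)) * y (p j)) * (sgn (σ j) * y j) := by
                rw [Finset.sum_eq_single (p j)]
                · rw [if_pos hpj.2, hy2j]
                  have h4 : y1 (p j) = y (p j) := Set.indicator_of_mem (show p j ∈ {i : Fin n | (i:ℕ) < s} from hpj.1) y
                  rw [h4]; ring
                · intro i _ hne
                  by_cases his : (i : ℕ) < s
                  · have : h i ≠ h j := fun hc => hne (huniq j i hje his hc)
                    rw [if_neg this, zero_mul]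
                  · have : y1 i = 0 := Set.indicator_of_notMem (show i ∉ {i : Fin n | (i:ℕ) < s} from his) y
                    rw [this]; ring
                · intro habs; exact absurd (Finset.mem_univ _) habs
              rw [inner, hej, ← sgn_mul_sgn]
              ring
            · have hej : e j = 0 := he_neg j (fun hc => hje hc.2)
              rw [hej, zero_mul]
              apply Finset.sum_eq_zero; intro i _
              by_cases his : (i : ℕ) < s
              · have : h i ≠ h j := fun hc => hje ⟨i, his, hc⟩
                rw [if_neg this, zero_mul]
              · have : y1 i = 0 := Set.indicator_of_notMem (show i ∉ {i : Fin n | (i:ℕ) < s} from his) y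
                rw [this]; ring
          · have hy2j : y2 j = 0 := Set.indicator_of_notMem (show j ∉ {i : Fin n | s ≤ (i:ℕ)} from hjs) y
            have hej : e j = 0 := he_neg j (fun hc => hjs hc.1)
            rw [hej, zero_mul]
            apply Finset.sum_eq_zero; intro i _
            rw [hy2j]; ring
  -- the involution
  set Φ : (Fin n → Bool) → (Fin n → Bool) := fun σ k =>
    if s ≤ (k : ℕ) ∧ ∃ i : Fin n, (i : ℕ) < s ∧ h i = h k then (σ k == σ (p k)) else σ k
    with hΦdef
  have hΦpos : ∀ (σ : Fin n → Bool) (k : Fin n),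
      (s ≤ (k : ℕ) ∧ ∃ i : Fin n, (i : ℕ) < s ∧ h i = h k) → Φ σ k = (σ k == σ (p k)) := by
    intro σ k hk; simp only [hΦdef]; rw [if_pos hk]
  have hΦneg : ∀ (σ : Fin n → Bool) (k : Fin n),
      ¬ (s ≤ (k : ℕ) ∧ ∃ i : Fin n, (i : ℕ) < s ∧ h i = h k) → Φ σ k = σ k := by
    intro σ k hk; simp only [hΦdef]; rw [if_neg hk]
  have hΦinv : ∀ σ, Φ (Φ σ) = σ := by
    intro σ; funext k
    by_cases hk : s ≤ (k : ℕ) ∧ ∃ i : Fin n, (i : ℕ) < s ∧ h i = h k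
    · have hpk : ¬ (s ≤ ((p k : Fin n) : ℕ) ∧ ∃ i : Fin n, (i : ℕ) < s ∧ h i = h (p k)) := by
        intro hc
        have := (hp k hk.2).1
        omega
      rw [hΦpos (Φ σ) k hk, hΦpos σ k hk, hΦneg σ (p k) hpk]
      exact beq_beq_right _ _
    · rw [hΦneg (Φ σ) k hk, hΦneg σ k hk]
  have hXΦ : ∀ σ : Fin n → Bool,
      (∑ a : Fin t, (SE h σ).mulVec y1 a * (SE h σ).mulVec y2 a)
        = ∑ j, e j * sgn (Φ σ j) := by
    intro σ
    rw [hXeq σ]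
    apply Finset.sum_congr rfl
    intro j _
    by_cases hj : s ≤ (j : ℕ) ∧ ∃ i : Fin n, (i : ℕ) < s ∧ h i = h j
    · rw [hΦpos σ j hj]
    · rw [he_neg j hj, zero_mul, zero_mul]
  -- transfer bad-count through the involution
  have hbadeq :
      (Finset.univ.filter (fun σ : Fin n → Bool =>
        ¬ |∑ a : Fin t, (SE h σ).mulVec y1 a * (SE h σ).mulVec y2 a| ≤ B)).card
      = (Finset.univ.filter (fun τ : Fin n → Bool => B < |∑ j, e j * sgn (τ j)|)).card := by
    apply Finset.card_bij' (fun σ _ => Φ σ) (fun τ _ => Φ τ)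
    · intro σ hσ
      rw [Finset.mem_filter] at hσ ⊢
      refine ⟨Finset.mem_univ _, ?_⟩
      rw [← hXΦ σ]
      exact lt_of_not_ge hσ.2
    · intro τ hτ
      rw [Finset.mem_filter] at hτ ⊢
      refine ⟨Finset.mem_univ _, ?_⟩
      rw [not_le, hXΦ (Φ τ), hΦinv τ]
      exact hτ.2
    · intro σ _; exact hΦinv σ
    · intro τ _; exact hΦinv τ
  -- the variance
  set V := ∑ j, e j ^ 2 with hVdef
  have hV0 : 0 ≤ V := Finset.sum_nonneg (fun j _ => sq_nonneg _)
  -- bound the bad count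
  have hbad : ((Finset.univ.filter (fun σ : Fin n → Bool =>
      ¬ |∑ a : Fin t, (SE h σ).mulVec y1 a * (SE h σ).mulVec y2 a| ≤ B)).card : ℝ)
      ≤ δC * 2 ^ n := by
    rw [hbadeq]
    rcases eq_or_lt_of_le hV0 with hVzero | hVpos
    · -- V = 0, all coefficients vanish
      have he0 : ∀ j, e j = 0 := by
        intro j
        have h1 := (Finset.sum_eq_zero_iff_of_nonneg
          (fun j _ => sq_nonneg (e j))).mp hVzero.symm j (Finset.mem_univ j)
        exact pow_eq_zero_iff (two_ne_zero) |>.mp h1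
      have hempty : Finset.univ.filter (fun τ : Fin n → Bool => B < |∑ j, e j * sgn (τ j)|)
          = ∅ := by
        apply Finset.filter_eq_empty_iff.mpr
        intro τ _
        have h1 : ∑ j, e j * sgn (τ j) = 0 :=
          Finset.sum_eq_zero (fun j _ => by rw [he0 j, zero_mul])
        rw [h1]
        simpa using hB0
      rw [hempty]
      simp only [Finset.card_empty, Nat.cast_zero]
      positivity
    · -- V > 0
      -- show V ≤ W and 0 < W
      have hsubW : ∀ i0 : Fin n, (i0 : ℕ) < s →
          (∑ j ∈ (Finset.univ.filter (fun j : Fin n =>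
              s ≤ (j:ℕ) ∧ ∃ i : Fin n, (i : ℕ) < s ∧ h i = h j)).filter (fun j => p j = i0),
            (y j * y (p j)) ^ 2) ≤ y i0 ^ 2 * W := by
        intro i0 hi0
        have step1 : (∑ j ∈ (Finset.univ.filter (fun j : Fin n =>
              s ≤ (j:ℕ) ∧ ∃ i : Fin n, (i : ℕ) < s ∧ h i = h j)).filter (fun j => p j = i0),
            (y j * y (p j)) ^ 2)
            = y i0 ^ 2 * ∑ j ∈ (Finset.univ.filter (fun j : Fin n =>
              s ≤ (j:ℕ) ∧ ∃ i : Fin n, (i : ℕ) < s ∧ h i = h j)).filter (fun j => p j = i0),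
              y j ^ 2 := by
          rw [Finset.mul_sum]
          apply Finset.sum_congr rfl
          intro j hj
          have hpj : p j = i0 := (Finset.mem_filter.mp hj).2
          rw [hpj]; ring
        rw [step1]
        apply mul_le_mul_of_nonneg_left ?_ (sq_nonneg _)
        calc ∑ j ∈ (Finset.univ.filter (fun j : Fin n =>
              s ≤ (j:ℕ) ∧ ∃ i : Fin n, (i : ℕ) < s ∧ h i = h j)).filter (fun j => p j = i0),
              y j ^ 2
            ≤ ∑ j ∈ Finset.univ.filter (fun j : Fin n => s ≤ (j:ℕ) ∧ h j = h i0), y j ^ 2 := by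
              apply Finset.sum_le_sum_of_subset_of_nonneg
              · intro j hj
                rw [Finset.mem_filter] at hj ⊢
                obtain ⟨hj1, hj2⟩ := hj
                rw [Finset.mem_filter] at hj1
                refine ⟨Finset.mem_univ _, hj1.2.1, ?_⟩
                have := (hp j hj1.2.2).2
                rw [hj2] at this
                exact this.symm
              · intro j _ _; exact sq_nonneg _
          _ ≤ W := hWbound i0
      have hVfib : V = ∑ i0 ∈ Finset.univ.filter (fun i : Fin n => (i:ℕ) < s),
          ∑ j ∈ (Finset.univ.filter (fun j : Fin n =>
              s ≤ (j:ℕ) ∧ ∃ i : Fin n, (i : ℕ) < s ∧ h i = h j)).filter (fun j => p j = i0),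
            (y j * y (p j)) ^ 2 := by
        rw [Finset.sum_fiberwise_of_maps_to]
        · rw [hVdef, Finset.sum_filter]
          apply Finset.sum_congr rfl
          intro j _
          by_cases hj : s ≤ (j:ℕ) ∧ ∃ i : Fin n, (i : ℕ) < s ∧ h i = h j
          · rw [if_pos hj, he_pos j hj]
          · rw [if_neg hj, he_neg j hj]; norm_num
        · intro j hj
          rw [Finset.mem_filter] at hj ⊢
          exact ⟨Finset.mem_univ _, (hp j hj.2.2).1⟩
      have hheavy1 : ∑ i0 ∈ Finset.univ.filter (fun i : Fin n => (i:ℕ) < s), y i0 ^ 2 ≤ 1 := by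
        rw [← hysum]
        exact Finset.sum_le_sum_of_subset_of_nonneg (Finset.filter_subset _ _)
          (fun _ _ _ => sq_nonneg _)
      have hheavy0 : 0 ≤ ∑ i0 ∈ Finset.univ.filter (fun i : Fin n => (i:ℕ) < s), y i0 ^ 2 :=
        Finset.sum_nonneg (fun _ _ => sq_nonneg _)
      have hVWS : V ≤ W * ∑ i0 ∈ Finset.univ.filter (fun i : Fin n => (i:ℕ) < s), y i0 ^ 2 := by
        rw [hVfib, Finset.mul_sum]
        apply Finset.sum_le_sum
        intro i0 hi0
        rw [Finset.mem_filter] at hi0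
        calc _ ≤ y i0 ^ 2 * W := hsubW i0 hi0.2
          _ = W * y i0 ^ 2 := by ring
      have hWpos : 0 < W := by nlinarith
      have hVleW : V ≤ W := by nlinarith
      have hWL : 0 < W * L := by nlinarith
      have hBpos : 0 < B := by
        rw [hBdef]
        have := Real.sqrt_pos.mpr hWL
        linarith
      have htail := rademacher_tail n e B V hBpos hVdef hVpos
      have hB2 : B ^ 2 = 4 * (W * L) := by
        rw [hBdef, mul_pow, Real.sq_sqrt hWL.le]; norm_num
      have hexparg : -(B ^ 2) / (2 * V) ≤ -(2 * L) := by
        rw [hB2, neg_div, neg_le_neg_iff, le_div_iff₀ (by linarith : (0:ℝ) < 2 * V)]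
        nlinarith
      have hexp2 : Real.exp (-(B ^ 2) / (2 * V)) ≤ Real.exp (-(2 * L)) :=
        Real.exp_le_exp.mpr hexparg
      have hδeq : Real.exp (-L) = δC := by
        have h13 : L = -Real.log δC := by rw [hLdef, one_div, Real.log_inv]
        rw [h13, neg_neg, Real.exp_log hδC]
      have h11 : (2:ℝ) ≤ Real.exp 1 := by nlinarith [Real.add_one_le_exp 1]
      have h12 : Real.exp (-1) ≤ 1/2 := by
        have h10 : Real.exp (-1) * Real.exp 1 = 1 := by
          rw [← Real.exp_add]; norm_num
        nlinarith [Real.exp_pos (-1)]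
      have h9 : Real.exp (-L) ≤ Real.exp (-1) := Real.exp_le_exp.mpr (by linarith)
      have hfin : 2 * Real.exp (-(2 * L)) ≤ δC := by
        have h8 : Real.exp (-(2 * L)) = Real.exp (-L) * Real.exp (-L) := by
          rw [← Real.exp_add]; congr 1; ring
        rw [h8, ← hδeq]
        nlinarith [Real.exp_pos (-L)]
      calc ((Finset.univ.filter
            (fun τ : Fin n → Bool => B < |∑ j, e j * sgn (τ j)|)).card : ℝ)
          ≤ 2 ^ n * (2 * Real.exp (-(B ^ 2) / (2 * V))) := htail
        _ ≤ 2 ^ n * δC := by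
            have h14 : 2 * Real.exp (-(B ^ 2) / (2 * V)) ≤ δC := by linarith
            have h15 : (0:ℝ) ≤ 2 ^ n := by positivity
            nlinarith
        _ = δC * 2 ^ n := by ring
  -- final assembly
  have hNat : Nat.card {σ : Fin n → Bool //
        |∑ a : Fin t, (SE h σ).mulVec y1 a * (SE h σ).mulVec y2 a| ≤ B}
      = (Finset.univ.filter (fun σ : Fin n → Bool =>
        |∑ a : Fin t, (SE h σ).mulVec y1 a * (SE h σ).mulVec y2 a| ≤ B)).card := by
    rw [Nat.card_eq_fintype_card, Fintype.card_subtype]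
  have hsplit : (Finset.univ.filter (fun σ : Fin n → Bool =>
        |∑ a : Fin t, (SE h σ).mulVec y1 a * (SE h σ).mulVec y2 a| ≤ B)).card
      + (Finset.univ.filter (fun σ : Fin n → Bool =>
        ¬ |∑ a : Fin t, (SE h σ).mulVec y1 a * (SE h σ).mulVec y2 a| ≤ B)).card
      = 2 ^ n := by
    rw [Finset.card_filter_add_card_filter_not, Finset.card_univ]
    simp
  have hc : (Fintype.card (Fin n → Bool) : ℝ) = 2 ^ n := by
    simp
  rw [hNat, hc]
  have hgb : ((Finset.univ.filter (fun σ : Fin n → Bool =>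
        |∑ a : Fin t, (SE h σ).mulVec y1 a * (SE h σ).mulVec y2 a| ≤ B)).card : ℝ)
      + ((Finset.univ.filter (fun σ : Fin n → Bool =>
        ¬ |∑ a : Fin t, (SE h σ).mulVec y1 a * (SE h σ).mulVec y2 a| ≤ B)).card : ℝ)
      = 2 ^ n := by
    exact_mod_cast hsplit
  nlinarith [hbad, hgb]
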